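/- Every nonempty member of the I-sparse set topology is uncountable: if U ∈ 𝒰 and U ≠ ∅, then U is an uncountable set. -/
import Mathlib


open MeasureTheory Filter Set
open scoped ENNReal

noncomputable section

/-- A nontrivial admissible ideal of subsets of ℕ: closed under subsets and
finite unions, contains every finite set, and does not contain ℕ itself. -/
structure AdmissibleIdeal : Type where
  carrier : Set (Set ℕ)
  subset_mem : ∀ ⦃A B : Set ℕ⦄, A ∈ carrier → B ⊆ A → B ∈ carrier
  union_mem : ∀ ⦃A B : Set ℕ⦄, A ∈ carrier → B ∈ carrier → A ∪ B ∈ carrier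
  finite_mem : ∀ A : Set ℕ, A.Finite → A ∈ carrier
  univ_not_mem : (Set.univ : Set ℕ) ∉ carrier

/-- The filter F(I) = {M ⊆ ℕ : ℕ \ M ∈ I} associated with the ideal I. -/
def AdmissibleIdeal.filter (I : AdmissibleIdeal) : Filter ℕ :=
  Filter.comk (· ∈ I.carrier) (I.finite_mem ∅ Set.finite_empty)
    (fun _t ht _s hs => I.subset_mem ht hs)
    (fun _s hs _t ht => I.union_mem hs ht)

/-- A sequence of closed intervals admissible about the point `p`:
each `J n` is a closed interval containing `p`, and
`{n : 0 < λ(J n) < 1/n} ∈ F(I)`. -/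
def AdmissibleSeq (I : AdmissibleIdeal) (p : ℝ) (J : ℕ → Set ℝ) : Prop :=
  (∀ n, ∃ a b : ℝ, a ≤ b ∧ J n = Set.Icc a b) ∧ (∀ n, p ∈ J n) ∧
    {n : ℕ | 0 < volume (J n) ∧ volume (J n) < (n : ℝ≥0∞)⁻¹} ∈ I.filter

/-- The sequence n ↦ λ(E ∩ J n)/λ(J n) (interpreted as 0 when λ(J n) = 0). -/
def ratioSeq (E : Set ℝ) (J : ℕ → Set ℝ) : ℕ → ℝ :=
  fun n => (volume (E ∩ J n) / volume (J n)).toReal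

/-- Upper I-density of `E` at `p`: sup over admissible sequences of the
limsup along `F(I)` of the measure ratios. -/
def upperIDensity (I : AdmissibleIdeal) (p : ℝ) (E : Set ℝ) : ℝ :=
  sSup {l : ℝ | ∃ J : ℕ → Set ℝ, AdmissibleSeq I p J ∧
    l = Filter.limsup (ratioSeq E J) I.filter}

/-- Lower I-density of `E` at `p`: inf over admissible sequences of the
liminf along `F(I)` of the measure ratios. -/
def lowerIDensity (I : AdmissibleIdeal) (p : ℝ) (E : Set ℝ) : ℝ :=
  sInf {l : ℝ | ∃ J : ℕ → Set ℝ, AdmissibleSeq I p J ∧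
    l = Filter.liminf (ratioSeq E J) I.filter}

/-- `C` is a measurable cover of `A`. -/
def IsMeasurableCover (C A : Set ℝ) : Prop :=
  MeasurableSet C ∧ A ⊆ C ∧
    ∀ F : Set ℝ, MeasurableSet F → F ⊆ C \ A → volume F = 0

/-- `A` is I-sparse at `x`, i.e. `A ∈ S_I(x)`. -/
def ISparseAt (I : AdmissibleIdeal) (A : Set ℝ) (x : ℝ) : Prop :=
  ∀ B : Set ℝ, MeasurableSet B → upperIDensity I x B < 1 →
    ∀ C : Set ℝ, IsMeasurableCover C A → upperIDensity I x (C ∪ B) < 1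

/-- The I-density topology T_I. -/
def IDensityTopology (I : AdmissibleIdeal) : Set (Set ℝ) :=
  {E | MeasurableSet E ∧ ∀ x ∈ E, lowerIDensity I x E = 1}

/-- The I-sparse set topology 𝒰. -/
def sparseTop (I : AdmissibleIdeal) : Set (Set ℝ) :=
  {E | ∀ x ∈ E, ISparseAt I Eᶜ x}

lemma AdmissibleIdeal.filter_neBot (I : AdmissibleIdeal) : I.filter.NeBot := by
  refine Filter.neBot_iff.2 (fun h => I.univ_not_mem ?_)
  have : (∅ : Set ℕ) ∈ I.filter := by rw [h]; exact Filter.mem_bot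
  simpa using (Filter.mem_comk.1 this)

lemma ratioSeq_le_one (E : Set ℝ) (J : ℕ → Set ℝ) (n : ℕ) : ratioSeq E J n ≤ 1 := by
  have h : volume (E ∩ J n) / volume (J n) ≤ 1 :=
    ENNReal.div_le_of_le_mul (by simpa using measure_mono (Set.inter_subset_right (s := E)))
  calc (volume (E ∩ J n) / volume (J n)).toReal ≤ (1 : ℝ≥0∞).toReal :=
        ENNReal.toReal_mono ENNReal.one_ne_top h
    _ = 1 := by simp

lemma exists_admissibleSeq (I : AdmissibleIdeal) (x : ℝ) :
    AdmissibleSeq I x (fun n => Set.Icc x (x + ((n : ℝ)^2 + 1)⁻¹)) := by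
  have hpos : ∀ n : ℕ, (0 : ℝ) < ((n : ℝ)^2 + 1)⁻¹ := by
    intro n; positivity
  refine ⟨fun n => ⟨x, x + ((n : ℝ)^2 + 1)⁻¹, by linarith [hpos n], rfl⟩,
    fun n => Set.left_mem_Icc.2 (by linarith [hpos n]), ?_⟩
  have : {n : ℕ | 0 < volume (Set.Icc x (x + ((n : ℝ)^2 + 1)⁻¹)) ∧
      volume (Set.Icc x (x + ((n : ℝ)^2 + 1)⁻¹)) < (n : ℝ≥0∞)⁻¹} = Set.univ := by
    ext n
    simp only [Set.mem_setOf_eq, Set.mem_univ, iff_true, Real.volume_Icc,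
      add_sub_cancel_left]
    constructor
    · exact ENNReal.ofReal_pos.2 (hpos n)
    · rcases Nat.eq_zero_or_pos n with h0 | h1
      · subst h0; simp [ENNReal.ofReal_lt_top]
      · have hn : (0 : ℝ) < n := by exact_mod_cast h1
        have : ((n : ℝ≥0∞))⁻¹ = ENNReal.ofReal ((n : ℝ)⁻¹) := by
          rw [← ENNReal.ofReal_natCast n, ENNReal.ofReal_inv_of_pos hn]
        rw [this]
        refine (ENNReal.ofReal_lt_ofReal_iff (by positivity)).2 ?_
        have h2 : (n : ℝ) < (n : ℝ)^2 + 1 := by nlinarith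
        exact inv_strictAnti₀ hn h2
  rw [this]
  exact Filter.univ_mem

lemma upperIDensity_empty_lt_one (I : AdmissibleIdeal) (x : ℝ) :
    upperIDensity I x (∅ : Set ℝ) < 1 := by
  have hle : upperIDensity I x (∅ : Set ℝ) ≤ 0 := by
    refine Real.sSup_le ?_ le_rfl
    rintro l ⟨J, _, rfl⟩
    have : ratioSeq (∅ : Set ℝ) J = fun _ => (0 : ℝ) := by
      funext n; simp [ratioSeq]
    rw [this]
    have := I.filter_neBot
    simp [Filter.limsup_const]
  linarith

lemma one_le_upperIDensity_univ (I : AdmissibleIdeal) (x : ℝ) :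
    1 ≤ upperIDensity I x (Set.univ : Set ℝ) := by
  have hnb := I.filter_neBot
  set J : ℕ → Set ℝ := fun n => Set.Icc x (x + ((n : ℝ)^2 + 1)⁻¹) with hJ
  have hadm := exists_admissibleSeq I x
  have hpos : ∀ n : ℕ, (0 : ℝ) < ((n : ℝ)^2 + 1)⁻¹ := by intro n; positivity
  have hratio : ratioSeq (Set.univ : Set ℝ) J = fun _ => (1 : ℝ) := by
    funext n
    have hv : volume (J n) = ENNReal.ofReal (((n : ℝ)^2 + 1)⁻¹) := by
      simp [hJ, Real.volume_Icc]
    have h0 : volume (J n) ≠ 0 := by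
      rw [hv]; exact (ENNReal.ofReal_pos.2 (hpos n)).ne'
    have ht : volume (J n) ≠ ⊤ := by rw [hv]; exact ENNReal.ofReal_ne_top
    simp [ratioSeq, Set.univ_inter, ENNReal.div_self h0 ht]
  have hmem : (1 : ℝ) ∈ {l : ℝ | ∃ J : ℕ → Set ℝ, AdmissibleSeq I x J ∧
      l = Filter.limsup (ratioSeq (Set.univ : Set ℝ) J) I.filter} := by
    refine ⟨J, hadm, ?_⟩
    rw [hratio]
    exact (Filter.limsup_const (1 : ℝ)).symm
  refine le_csSup ⟨1, ?_⟩ hmem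
  rintro l ⟨J', _, rfl⟩
  refine Filter.limsup_le_of_le ?_ (Filter.Eventually.of_forall (ratioSeq_le_one _ _))
  exact Filter.isCoboundedUnder_le_of_le I.filter (fun n => ENNReal.toReal_nonneg)

/-- Every nonempty member of the I-sparse set topology is uncountable. -/
theorem sparseTop_nonempty_uncountable (I : AdmissibleIdeal) (U : Set ℝ)
    (hU : U ∈ sparseTop I) (hne : U.Nonempty) :
    ¬ U.Countable := by
  intro hcount
  obtain ⟨x, hx⟩ := hne
  have hcover : IsMeasurableCover Set.univ Uᶜ := by
    refine ⟨MeasurableSet.univ, Set.subset_univ _, fun F _ hF => ?_⟩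
    have hFU : F ⊆ U := by
      intro y hy
      have := hF hy
      simpa using this.2
    exact measure_mono_null hFU (hcount.measure_zero volume)
  have h := hU x hx ∅ MeasurableSet.empty (upperIDensity_empty_lt_one I x)
    Set.univ hcover
  rw [Set.union_empty] at h
  exact absurd (one_le_upperIDensity_univ I x) (not_le.2 h)
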